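/- The maps ψ and ψ⁻¹ are mutually inverse bijections between P(ℚ) = {(a,b,c,A) ∈ ℚ³ × ℤ* : a² + b² = c², ab = 2A} and C(ℚ) = {(x,y,A) ∈ ℚ × ℚ* × ℤ* : y² = x³ − A²x}. -/

import Mathlib

def PQ : Set (ℚ × ℚ × ℚ × ℤ) :=
  {p | p.2.2.2 ≠ 0 ∧ p.1 ^ 2 + p.2.1 ^ 2 = p.2.2.1 ^ 2 ∧ p.1 * p.2.1 = 2 * p.2.2.2}

def CQ : Set (ℚ × ℚ × ℤ) :=
  {p | p.2.1 ≠ 0 ∧ p.2.2 ≠ 0 ∧ p.2.1 ^ 2 = p.1 ^ 3 - (p.2.2 : ℚ) ^ 2 * p.1}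

def psiMap (p : ℚ × ℚ × ℚ × ℤ) : ℚ × ℚ × ℤ :=
  (p.2.1 * (p.2.1 + p.2.2.1) / 2, p.2.1 ^ 2 * (p.2.1 + p.2.2.1) / 2, p.2.2.2)

def psiInvMap (p : ℚ × ℚ × ℤ) : ℚ × ℚ × ℚ × ℤ :=
  (2 * p.1 * p.2.2 / p.2.1, (p.1 ^ 2 - (p.2.2 : ℚ) ^ 2) / p.2.1,
    (p.1 ^ 2 + (p.2.2 : ℚ) ^ 2) / p.2.1, p.2.2)

lemma pq_facts {a b c : ℚ} {A : ℤ} (h : (a, b, c, A) ∈ PQ) :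
    (A : ℚ) ≠ 0 ∧ a ≠ 0 ∧ b ≠ 0 ∧ b + c ≠ 0 := by
  obtain ⟨hA, hpy, hab⟩ := h
  simp only [PQ, Set.mem_setOf_eq] at hA hpy hab
  have hA' : (A : ℚ) ≠ 0 := Int.cast_ne_zero.mpr hA
  have hab' : a * b ≠ 0 := by rw [hab]; positivity
  have ha : a ≠ 0 := left_ne_zero_of_mul hab'
  have hb : b ≠ 0 := right_ne_zero_of_mul hab'
  refine ⟨hA', ha, hb, fun hbc => ha ?_⟩
  have hc : c = -b := by linarith
  subst hc
  have : a ^ 2 = 0 := by nlinarith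
  exact pow_eq_zero_iff (n := 2) (by norm_num) |>.mp this

lemma mapsTo_psi : Set.MapsTo psiMap PQ CQ := by
  rintro ⟨a, b, c, A⟩ h
  obtain ⟨hA', ha, hb, hbc⟩ := pq_facts h
  obtain ⟨hA, hpy, hab⟩ := h
  simp only [PQ, Set.mem_setOf_eq] at hpy hab
  have hAq : (A : ℚ) = a * b / 2 := by linarith
  refine ⟨?_, hA, ?_⟩
  · simp only [psiMap]
    positivity
  · simp only [psiMap]
    rw [hAq]
    linear_combination (b ^ 3 * (b + c) / 8) * hpy

lemma cq_facts {x y : ℚ} {A : ℤ} (h : (x, y, A) ∈ CQ) :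
    (A : ℚ) ≠ 0 ∧ x ≠ 0 ∧ x ^ 2 - (A : ℚ) ^ 2 ≠ 0 := by
  obtain ⟨hy, hA, heq⟩ := h
  simp only [CQ, Set.mem_setOf_eq] at hy hA heq
  have hA' : (A : ℚ) ≠ 0 := Int.cast_ne_zero.mpr hA
  have h2 : x * (x ^ 2 - (A : ℚ) ^ 2) ≠ 0 := by
    intro h0
    apply pow_ne_zero 2 hy
    rw [heq]; linear_combination h0
  exact ⟨hA', left_ne_zero_of_mul h2, right_ne_zero_of_mul h2⟩

lemma mapsTo_inv : Set.MapsTo psiInvMap CQ PQ := by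
  rintro ⟨x, y, A⟩ h
  obtain ⟨hA', hx, hx2⟩ := cq_facts h
  obtain ⟨hy, hA, heq⟩ := h
  simp only [CQ, Set.mem_setOf_eq] at hy hA heq
  refine ⟨hA, ?_, ?_⟩
  · show (2 * x * A / y) ^ 2 + ((x ^ 2 - (A : ℚ) ^ 2) / y) ^ 2 = ((x ^ 2 + (A : ℚ) ^ 2) / y) ^ 2
    ring
  · show 2 * x * (A : ℚ) / y * ((x ^ 2 - (A : ℚ) ^ 2) / y) = 2 * (A : ℚ)
    rw [div_mul_div_comm, div_eq_iff (by positivity : y * y ≠ 0)]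
    linear_combination (-2 * (A : ℚ)) * heq

lemma invOn_psi : Set.InvOn psiInvMap psiMap PQ CQ := by
  constructor
  · rintro ⟨a, b, c, A⟩ h
    obtain ⟨hA', ha, hb, hbc⟩ := pq_facts h
    obtain ⟨hA, hpy, hab⟩ := h
    simp only [PQ, Set.mem_setOf_eq] at hpy hab
    have hAq : (A : ℚ) = a * b / 2 := by linarith
    have hy : b ^ 2 * (b + c) / 2 ≠ 0 := by
      have : b ^ 2 * (b + c) ≠ 0 := mul_ne_zero (pow_ne_zero 2 hb) hbc
      simpa using this
    simp only [psiMap, psiInvMap, Prod.mk.injEq]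
    refine ⟨?_, ?_, ?_, trivial⟩
    · rw [hAq, div_eq_iff hy]; ring
    · rw [div_eq_iff hy]; rw [hAq]; linear_combination (-b ^ 2 / 4) * hpy
    · rw [div_eq_iff hy]; rw [hAq]; linear_combination (b ^ 2 / 4) * hpy
  · rintro ⟨x, y, A⟩ h
    obtain ⟨hA', hx, hx2⟩ := cq_facts h
    obtain ⟨hy, hA, heq⟩ := h
    simp only [CQ, Set.mem_setOf_eq] at hy hA heq
    have hy2 : y ^ 2 ≠ 0 := pow_ne_zero 2 hy
    simp only [psiMap, psiInvMap, Prod.mk.injEq]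
    refine ⟨?_, ?_, trivial⟩
    · rw [← add_div, div_mul_div_comm, div_div, div_eq_iff (by positivity : y * y * 2 ≠ 0)]
      linear_combination (-2 * x) * heq
    · rw [← add_div, div_pow, div_mul_div_comm, div_div,
        div_eq_iff (by positivity : y ^ 2 * y * 2 ≠ 0)]
      linear_combination (-2 * (x ^ 3 - (A : ℚ) ^ 2 * x + y ^ 2)) * heq

theorem psi_bijOn_and_invOn :
    Set.BijOn psiMap PQ CQ ∧ Set.BijOn psiInvMap CQ PQ ∧
      Set.InvOn psiInvMap psiMap PQ CQ :=
  ⟨invOn_psi.bijOn mapsTo_psi mapsTo_inv,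
   invOn_psi.symm.bijOn mapsTo_inv mapsTo_psi, invOn_psi⟩
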